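/- If B₁ and B₂ are crystals associated with a symmetrizable Kac–Moody algebra, then the set B₁ × B₂ equipped with the tensor product maps (wt(b₁⊗b₂)=wt(b₁)+wt(b₂), ε_i(b₁⊗b₂)=max(ε_i(b₁), ε_i(b₂)−⟨h_i,wt(b₁)⟩), φ_i(b₁⊗b₂)=max(φ_i(b₂), φ_i(b₁)+⟨h_i,wt(b₂)⟩), with ẽ_i acting on the first factor when φ_i(b₁)≥ε_i(b₂) and on the second otherwise, and f̃_i acting on the first factor when φ_i(b₁)>ε_i(b₂) and on the second otherwise) again satisfies all the crystal axioms. -/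

import Mathlib

open scoped Classical

/-- Data of a crystal associated with a symmetrizable Kac–Moody algebra:
a set `B` with maps `wt : B → P`, `ẽ_i, f̃_i : B → B ∪ {0}` (encoded via `Option`),
and `ε_i, φ_i : B → ℤ ∪ {−∞}` (encoded via `WithBot ℤ`). -/
structure KMCrystalData (I P B : Type) [AddCommGroup P] where
  wt : B → P
  e : I → B → Option B
  f : I → B → Option B
  eps : I → B → WithBot ℤ
  phi : I → B → WithBot ℤ

/-- The crystal axioms, relative to the simple roots `α : I → P` and the pairings
`pair i = ⟨h_i, ·⟩` with the simple coroots. -/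
structure IsKMCrystal {I P B : Type} [AddCommGroup P]
    (α : I → P) (pair : I → P →+ ℤ) (C : KMCrystalData I P B) : Prop where
  phi_eq : ∀ i b, C.phi i b = C.eps i b + ((pair i (C.wt b) : ℤ) : WithBot ℤ)
  wt_e : ∀ i b b', C.e i b = some b' → C.wt b' = C.wt b + α i
  wt_f : ∀ i b b', C.f i b = some b' → C.wt b' = C.wt b - α i
  eps_e : ∀ i b b', C.e i b = some b' → C.eps i b' = C.eps i b + ((-1 : ℤ) : WithBot ℤ)
  phi_e : ∀ i b b', C.e i b = some b' → C.phi i b' = C.phi i b + ((1 : ℤ) : WithBot ℤ)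
  eps_f : ∀ i b b', C.f i b = some b' → C.eps i b' = C.eps i b + ((1 : ℤ) : WithBot ℤ)
  phi_f : ∀ i b b', C.f i b = some b' → C.phi i b' = C.phi i b + ((-1 : ℤ) : WithBot ℤ)
  ef : ∀ i b b', C.f i b = some b' ↔ C.e i b' = some b
  phi_bot : ∀ i b, C.phi i b = ⊥ → C.e i b = none ∧ C.f i b = none

/-- The tensor product `B₁ ⊗ B₂` of two crystals: the set `B₁ × B₂` with the
tensor product rule for the maps. -/
noncomputable def KMtensor {I P B1 B2 : Type} [AddCommGroup P] (pair : I → P →+ ℤ)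
    (C1 : KMCrystalData I P B1) (C2 : KMCrystalData I P B2) :
    KMCrystalData I P (B1 × B2) where
  wt p := C1.wt p.1 + C2.wt p.2
  eps i p := max (C1.eps i p.1) (C2.eps i p.2 + ((-(pair i (C1.wt p.1)) : ℤ) : WithBot ℤ))
  phi i p := max (C2.phi i p.2) (C1.phi i p.1 + ((pair i (C2.wt p.2) : ℤ) : WithBot ℤ))
  e i p := if C2.eps i p.2 ≤ C1.phi i p.1 then (C1.e i p.1).map (fun b => (b, p.2))
           else (C2.e i p.2).map (fun b => (p.1, b))
  f i p := if C2.eps i p.2 < C1.phi i p.1 then (C1.f i p.1).map (fun b => (b, p.2))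
           else (C2.f i p.2).map (fun b => (p.1, b))

namespace KMAux

lemma coe2 (a : WithBot ℤ) (m n : ℤ) :
    a + (m : WithBot ℤ) + (n : WithBot ℤ) = a + ((m + n : ℤ) : WithBot ℤ) := by
  rw [add_assoc, ← WithBot.coe_add]

lemma max_addc (a b : WithBot ℤ) (n : ℤ) :
    max a b + (n : WithBot ℤ) = max (a + n) (b + n) := by
  rcases le_total a b with h | h
  · rw [max_eq_right h, max_eq_right (add_le_add_left h _)]
  · rw [max_eq_left h, max_eq_left (add_le_add_left h _)]

lemma addc_eq_bot (a : WithBot ℤ) (n : ℤ) : a + (n : WithBot ℤ) = ⊥ ↔ a = ⊥ := by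
  simp [WithBot.add_eq_bot]

lemma wb_le {a b : WithBot ℤ} {m n k l : ℤ}
    (h : a + (m : WithBot ℤ) ≤ b + (n : WithBot ℤ)) (hkl : k + n ≤ l + m) :
    a + (k : WithBot ℤ) ≤ b + (l : WithBot ℤ) := by
  induction a using WithBot.recBotCoe with
  | bot => simp
  | coe x =>
    induction b using WithBot.recBotCoe with
    | bot => simp [← WithBot.coe_add] at h
    | coe y =>
      rw [← WithBot.coe_add, ← WithBot.coe_add, WithBot.coe_le_coe] at h ⊢
      omega

lemma wb_lt {a b : WithBot ℤ} {m n k l : ℤ}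
    (h : a + (m : WithBot ℤ) < b + (n : WithBot ℤ)) (hkl : k + n ≤ l + m + 1) :
    a + (k : WithBot ℤ) ≤ b + (l : WithBot ℤ) := by
  induction a using WithBot.recBotCoe with
  | bot => simp
  | coe x =>
    induction b using WithBot.recBotCoe with
    | bot => exact absurd h (by simp [← WithBot.coe_add])
    | coe y =>
      rw [← WithBot.coe_add, ← WithBot.coe_add, WithBot.coe_lt_coe] at h
      rw [← WithBot.coe_add, ← WithBot.coe_add, WithBot.coe_le_coe]
      omega

lemma wb_lt_lt {a b : WithBot ℤ} {m n k l : ℤ}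
    (h : a + (m : WithBot ℤ) < b + (n : WithBot ℤ)) (hkl : k + n ≤ l + m) :
    a + (k : WithBot ℤ) < b + (l : WithBot ℤ) := by
  induction a using WithBot.recBotCoe with
  | bot =>
    induction b using WithBot.recBotCoe with
    | bot => simp at h
    | coe y => simp [← WithBot.coe_add, WithBot.bot_lt_coe]
  | coe x =>
    induction b using WithBot.recBotCoe with
    | bot => exact absurd h (by simp [← WithBot.coe_add])
    | coe y =>
      rw [← WithBot.coe_add, ← WithBot.coe_add, WithBot.coe_lt_coe] at h ⊢
      omega

lemma wb_le_lt {a b : WithBot ℤ} {m n k l : ℤ}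
    (h : a + (m : WithBot ℤ) ≤ b + (n : WithBot ℤ)) (hb : b ≠ ⊥) (hkl : k + n < l + m) :
    a + (k : WithBot ℤ) < b + (l : WithBot ℤ) := by
  induction a using WithBot.recBotCoe with
  | bot =>
    induction b using WithBot.recBotCoe with
    | bot => exact absurd rfl hb
    | coe y => simp [← WithBot.coe_add, WithBot.bot_lt_coe]
  | coe x =>
    induction b using WithBot.recBotCoe with
    | bot => simp [← WithBot.coe_add] at h
    | coe y =>
      rw [← WithBot.coe_add, ← WithBot.coe_add, WithBot.coe_le_coe] at h
      rw [← WithBot.coe_add, ← WithBot.coe_add, WithBot.coe_lt_coe]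
      omega

variable {I P B : Type} [AddCommGroup P] {α : I → P} {pair : I → P →+ ℤ}
  {C : KMCrystalData I P B}

lemma eps_ne_bot_of_e (h : IsKMCrystal α pair C) {i : I} {b b' : B}
    (he : C.e i b = some b') : C.eps i b ≠ ⊥ := by
  intro hb
  have : C.phi i b = ⊥ := by rw [h.phi_eq, hb, WithBot.bot_add]
  simp [(h.phi_bot i b this).1] at he

lemma eps_ne_bot_of_f (h : IsKMCrystal α pair C) {i : I} {b b' : B}
    (hf : C.f i b = some b') : C.eps i b ≠ ⊥ := by
  intro hb
  have : C.phi i b = ⊥ := by rw [h.phi_eq, hb, WithBot.bot_add]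
  simp [(h.phi_bot i b this).2] at hf

lemma phi_ne_bot_of_e (h : IsKMCrystal α pair C) {i : I} {b b' : B}
    (he : C.e i b = some b') : C.phi i b ≠ ⊥ := by
  intro hb
  simp [(h.phi_bot i b hb).1] at he

lemma phi_ne_bot_of_f (h : IsKMCrystal α pair C) {i : I} {b b' : B}
    (hf : C.f i b = some b') : C.phi i b ≠ ⊥ := by
  intro hb
  simp [(h.phi_bot i b hb).2] at hf

lemma pair_e (h : IsKMCrystal α pair C) {i : I} {b b' : B}
    (he : C.e i b = some b') : pair i (α i) = 2 := by
  obtain ⟨m, hm⟩ := WithBot.ne_bot_iff_exists.mp (eps_ne_bot_of_e h he)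
  have h1 := h.phi_eq i b'
  rw [h.eps_e i b b' he, h.wt_e i b b' he, map_add, h.phi_e i b b' he,
      h.phi_eq i b, ← hm, ← WithBot.coe_add, ← WithBot.coe_add, ← WithBot.coe_add,
      ← WithBot.coe_add, WithBot.coe_inj] at h1
  omega

lemma pair_f (h : IsKMCrystal α pair C) {i : I} {b b' : B}
    (hf : C.f i b = some b') : pair i (α i) = 2 := by
  obtain ⟨m, hm⟩ := WithBot.ne_bot_iff_exists.mp (eps_ne_bot_of_f h hf)
  have h1 := h.phi_eq i b'
  rw [h.eps_f i b b' hf, h.wt_f i b b' hf, map_sub, h.phi_f i b b' hf,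
      h.phi_eq i b, ← hm, Int.sub_eq_add_neg, ← WithBot.coe_add, ← WithBot.coe_add,
      ← WithBot.coe_add, ← WithBot.coe_add, WithBot.coe_inj] at h1
  omega

end KMAux

open KMAux

/-- If `B₁` and `B₂` are crystals associated with a symmetrizable
Kac–Moody algebra, then `B₁ × B₂` equipped with the tensor product maps again
satisfies all the crystal axioms. -/
theorem tensor_product_is_crystal {I P B1 B2 : Type} [AddCommGroup P]
    (α : I → P) (pair : I → P →+ ℤ)
    (C1 : KMCrystalData I P B1) (C2 : KMCrystalData I P B2)
    (h1 : IsKMCrystal α pair C1) (h2 : IsKMCrystal α pair C2) :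
    IsKMCrystal α pair (KMtensor pair C1 C2) := by
  constructor
  -- phi_eq
  · intro i p
    obtain ⟨b1, b2⟩ := p
    simp only [KMtensor, map_add]
    rw [h1.phi_eq, h2.phi_eq, max_addc, coe2, coe2, neg_add_cancel_left, max_comm]
  -- wt_e
  · intro i p p' hp
    obtain ⟨b1, b2⟩ := p
    obtain ⟨b1', b2'⟩ := p'
    simp only [KMtensor] at hp ⊢
    split_ifs at hp with hc
    · rw [Option.map_eq_some_iff] at hp
      obtain ⟨c, hec, heq⟩ := hp
      injection heq with e1 e2; subst e1; subst e2
      rw [h1.wt_e i b1 c hec]; abel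
    · rw [Option.map_eq_some_iff] at hp
      obtain ⟨c, hec, heq⟩ := hp
      injection heq with e1 e2; subst e1; subst e2
      rw [h2.wt_e i b2 c hec]; abel
  -- wt_f
  · intro i p p' hp
    obtain ⟨b1, b2⟩ := p
    obtain ⟨b1', b2'⟩ := p'
    simp only [KMtensor] at hp ⊢
    split_ifs at hp with hc
    · rw [Option.map_eq_some_iff] at hp
      obtain ⟨c, hec, heq⟩ := hp
      injection heq with e1 e2; subst e1; subst e2
      rw [h1.wt_f i b1 c hec]; abel
    · rw [Option.map_eq_some_iff] at hp
      obtain ⟨c, hec, heq⟩ := hp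
      injection heq with e1 e2; subst e1; subst e2
      rw [h2.wt_f i b2 c hec]; abel
  -- eps_e
  · intro i p p' hp
    obtain ⟨b1, b2⟩ := p
    obtain ⟨b1', b2'⟩ := p'
    simp only [KMtensor] at hp ⊢
    split_ifs at hp with hc
    · rw [Option.map_eq_some_iff] at hp
      obtain ⟨c, hec, heq⟩ := hp
      injection heq with e1 e2; subst e1; subst e2
      rw [h1.phi_eq] at hc
      have hpad : C2.eps i b2 + ((0:ℤ) : WithBot ℤ) ≤
          C1.eps i b1 + ((pair i (C1.wt b1) : ℤ) : WithBot ℤ) := by simpa using hc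
      rw [h1.eps_e i b1 c hec, h1.wt_e i b1 c hec, map_add, pair_e h1 hec]
      have hA : C2.eps i b2 + ((-(pair i (C1.wt b1) + 2) : ℤ) : WithBot ℤ) ≤
          C1.eps i b1 + ((-1 : ℤ) : WithBot ℤ) := wb_le hpad (by omega)
      have hB : C2.eps i b2 + ((-(pair i (C1.wt b1)) : ℤ) : WithBot ℤ) ≤ C1.eps i b1 := by
        simpa using wb_le hpad (show -(pair i (C1.wt b1)) + pair i (C1.wt b1) ≤ 0 + 0 by omega)
      rw [max_eq_left hA, max_eq_left hB]
    · have hlt := not_le.mp hc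
      rw [h1.phi_eq] at hlt
      have hpad : C1.eps i b1 + ((pair i (C1.wt b1) : ℤ) : WithBot ℤ) <
          C2.eps i b2 + ((0:ℤ) : WithBot ℤ) := by simpa using hlt
      rw [Option.map_eq_some_iff] at hp
      obtain ⟨c, hec, heq⟩ := hp
      injection heq with e1 e2; subst e1; subst e2
      rw [h2.eps_e i b2 c hec]
      have hA : C1.eps i b1 ≤ C2.eps i b2 + ((-1 : ℤ) : WithBot ℤ)
          + ((-(pair i (C1.wt b1)) : ℤ) : WithBot ℤ) := by
        rw [coe2]
        simpa using wb_lt (k := 0) (l := -1 + -(pair i (C1.wt b1))) hpad (by omega)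
      have hB : C1.eps i b1 ≤ C2.eps i b2 + ((-(pair i (C1.wt b1)) : ℤ) : WithBot ℤ) := by
        simpa using wb_lt (k := 0) (l := -(pair i (C1.wt b1))) hpad (by omega)
      rw [max_eq_right hA, max_eq_right hB, add_right_comm]
  -- phi_e
  · intro i p p' hp
    obtain ⟨b1, b2⟩ := p
    obtain ⟨b1', b2'⟩ := p'
    simp only [KMtensor] at hp ⊢
    split_ifs at hp with hc
    · rw [Option.map_eq_some_iff] at hp
      obtain ⟨c, hec, heq⟩ := hp
      injection heq with e1 e2; subst e1; subst e2
      have hpad : C2.eps i b2 + ((0:ℤ) : WithBot ℤ) ≤ C1.phi i b1 + ((0:ℤ) : WithBot ℤ) := by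
        simpa using hc
      rw [h1.phi_e i b1 c hec]
      have hB : C2.phi i b2 ≤ C1.phi i b1 + ((pair i (C2.wt b2) : ℤ) : WithBot ℤ) := by
        rw [h2.phi_eq]; exact wb_le hpad (by omega)
      have hA : C2.phi i b2 ≤ C1.phi i b1 + ((1 : ℤ) : WithBot ℤ)
          + ((pair i (C2.wt b2) : ℤ) : WithBot ℤ) := by
        rw [coe2, h2.phi_eq]; exact wb_le hpad (by omega)
      rw [max_eq_right hA, max_eq_right hB, add_right_comm]
    · have hlt := not_le.mp hc
      have hpad : C1.phi i b1 + ((0:ℤ) : WithBot ℤ) < C2.eps i b2 + ((0:ℤ) : WithBot ℤ) := by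
        simpa using hlt
      rw [Option.map_eq_some_iff] at hp
      obtain ⟨c, hec, heq⟩ := hp
      injection heq with e1 e2; subst e1; subst e2
      rw [h2.phi_e i b2 c hec, h2.wt_e i b2 c hec, map_add, pair_e h2 hec]
      have hB : C1.phi i b1 + ((pair i (C2.wt b2) : ℤ) : WithBot ℤ) ≤ C2.phi i b2 := by
        rw [h2.phi_eq]; exact wb_lt hpad (by omega)
      have hA : C1.phi i b1 + ((pair i (C2.wt b2) + 2 : ℤ) : WithBot ℤ) ≤
          C2.phi i b2 + ((1 : ℤ) : WithBot ℤ) := by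
        rw [h2.phi_eq, coe2]; exact wb_lt hpad (by omega)
      rw [max_eq_left hA, max_eq_left hB]
  -- eps_f
  · intro i p p' hp
    obtain ⟨b1, b2⟩ := p
    obtain ⟨b1', b2'⟩ := p'
    simp only [KMtensor] at hp ⊢
    split_ifs at hp with hc
    · rw [Option.map_eq_some_iff] at hp
      obtain ⟨c, hfc, heq⟩ := hp
      injection heq with e1 e2; subst e1; subst e2
      rw [h1.phi_eq] at hc
      have hpad : C2.eps i b2 + ((0:ℤ) : WithBot ℤ) <
          C1.eps i b1 + ((pair i (C1.wt b1) : ℤ) : WithBot ℤ) := by simpa using hc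
      rw [h1.eps_f i b1 c hfc, h1.wt_f i b1 c hfc, map_sub, pair_f h1 hfc]
      have hA : C2.eps i b2 + ((-(pair i (C1.wt b1) - 2) : ℤ) : WithBot ℤ) ≤
          C1.eps i b1 + ((1 : ℤ) : WithBot ℤ) := wb_lt hpad (by omega)
      have hB : C2.eps i b2 + ((-(pair i (C1.wt b1)) : ℤ) : WithBot ℤ) ≤ C1.eps i b1 := by
        simpa using wb_lt hpad (show -(pair i (C1.wt b1)) + pair i (C1.wt b1) ≤ 0 + 0 + 1 by omega)
      rw [max_eq_left hA, max_eq_left hB]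
    · have hle := not_lt.mp hc
      rw [h1.phi_eq] at hle
      have hpad : C1.eps i b1 + ((pair i (C1.wt b1) : ℤ) : WithBot ℤ) ≤
          C2.eps i b2 + ((0:ℤ) : WithBot ℤ) := by simpa using hle
      rw [Option.map_eq_some_iff] at hp
      obtain ⟨c, hfc, heq⟩ := hp
      injection heq with e1 e2; subst e1; subst e2
      rw [h2.eps_f i b2 c hfc]
      have hA : C1.eps i b1 ≤ C2.eps i b2 + ((1 : ℤ) : WithBot ℤ)
          + ((-(pair i (C1.wt b1)) : ℤ) : WithBot ℤ) := by
        rw [coe2]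
        simpa using wb_le (k := 0) (l := 1 + -(pair i (C1.wt b1))) hpad (by omega)
      have hB : C1.eps i b1 ≤ C2.eps i b2 + ((-(pair i (C1.wt b1)) : ℤ) : WithBot ℤ) := by
        simpa using wb_le (k := 0) (l := -(pair i (C1.wt b1))) hpad (by omega)
      rw [max_eq_right hA, max_eq_right hB, add_right_comm]
  -- phi_f
  · intro i p p' hp
    obtain ⟨b1, b2⟩ := p
    obtain ⟨b1', b2'⟩ := p'
    simp only [KMtensor] at hp ⊢
    split_ifs at hp with hc
    · rw [Option.map_eq_some_iff] at hp
      obtain ⟨c, hfc, heq⟩ := hp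
      injection heq with e1 e2; subst e1; subst e2
      have hpad : C2.eps i b2 + ((0:ℤ) : WithBot ℤ) < C1.phi i b1 + ((0:ℤ) : WithBot ℤ) := by
        simpa using hc
      rw [h1.phi_f i b1 c hfc]
      have hB : C2.phi i b2 ≤ C1.phi i b1 + ((pair i (C2.wt b2) : ℤ) : WithBot ℤ) := by
        rw [h2.phi_eq]; exact wb_lt hpad (by omega)
      have hA : C2.phi i b2 ≤ C1.phi i b1 + ((-1 : ℤ) : WithBot ℤ)
          + ((pair i (C2.wt b2) : ℤ) : WithBot ℤ) := by
        rw [coe2, h2.phi_eq]; exact wb_lt hpad (by omega)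
      rw [max_eq_right hA, max_eq_right hB, add_right_comm]
    · have hle := not_lt.mp hc
      have hpad : C1.phi i b1 + ((0:ℤ) : WithBot ℤ) ≤ C2.eps i b2 + ((0:ℤ) : WithBot ℤ) := by
        simpa using hle
      rw [Option.map_eq_some_iff] at hp
      obtain ⟨c, hfc, heq⟩ := hp
      injection heq with e1 e2; subst e1; subst e2
      rw [h2.phi_f i b2 c hfc, h2.wt_f i b2 c hfc, map_sub, pair_f h2 hfc]
      have hB : C1.phi i b1 + ((pair i (C2.wt b2) : ℤ) : WithBot ℤ) ≤ C2.phi i b2 := by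
        rw [h2.phi_eq]; exact wb_le hpad (by omega)
      have hA : C1.phi i b1 + ((pair i (C2.wt b2) - 2 : ℤ) : WithBot ℤ) ≤
          C2.phi i b2 + ((-1 : ℤ) : WithBot ℤ) := by
        rw [h2.phi_eq, coe2]; exact wb_le hpad (by omega)
      rw [max_eq_left hA, max_eq_left hB]
  -- ef
  · intro i p p'
    obtain ⟨b1, b2⟩ := p
    obtain ⟨b1', b2'⟩ := p'
    simp only [KMtensor]
    constructor
    · intro hf
      split_ifs at hf with hc
      · rw [Option.map_eq_some_iff] at hf
        obtain ⟨c, hfc, heq⟩ := hf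
        injection heq with e1 e2; subst e1; subst e2
        have he := (h1.ef i b1 c).mp hfc
        have hcond : C2.eps i b2 ≤ C1.phi i c := by
          rw [h1.phi_f i b1 c hfc]
          have hpad : C2.eps i b2 + ((0:ℤ) : WithBot ℤ) < C1.phi i b1 + ((0:ℤ) : WithBot ℤ) := by
            simpa using hc
          simpa using wb_lt (k := 0) (l := -1) hpad (by omega)
        rw [if_pos hcond, he, Option.map_some]
      · have hle := not_lt.mp hc
        rw [Option.map_eq_some_iff] at hf
        obtain ⟨c, hfc, heq⟩ := hf
        injection heq with e1 e2; subst e1; subst e2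
        have he := (h2.ef i b2 c).mp hfc
        have hpad : C1.phi i b1 + ((0:ℤ) : WithBot ℤ) ≤ C2.eps i b2 + ((0:ℤ) : WithBot ℤ) := by
          simpa using hle
        have hcond : ¬ (C2.eps i c ≤ C1.phi i b1) := by
          rw [h2.eps_f i b2 c hfc]
          refine not_le.mpr ?_
          simpa using wb_le_lt (k := 0) (l := 1) hpad (eps_ne_bot_of_f h2 hfc) (by omega)
        rw [if_neg hcond, he, Option.map_some]
    · intro he
      split_ifs at he with hc
      · rw [Option.map_eq_some_iff] at he
        obtain ⟨c, hec, heq⟩ := he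
        injection heq with e1 e2; subst e1; subst e2
        have hf := (h1.ef i c b1').mpr hec
        have hpad : C2.eps i b2' + ((0:ℤ) : WithBot ℤ) ≤ C1.phi i b1' + ((0:ℤ) : WithBot ℤ) := by
          simpa using hc
        have hcond : C2.eps i b2' < C1.phi i c := by
          rw [h1.phi_e i b1' c hec]
          simpa using wb_le_lt (k := 0) (l := 1) hpad (phi_ne_bot_of_e h1 hec) (by omega)
        rw [if_pos hcond, hf, Option.map_some]
      · have hlt := not_le.mp hc
        rw [Option.map_eq_some_iff] at he
        obtain ⟨c, hec, heq⟩ := he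
        injection heq with e1 e2; subst e1; subst e2
        have hf := (h2.ef i c b2').mpr hec
        have hpad : C1.phi i b1' + ((0:ℤ) : WithBot ℤ) < C2.eps i b2' + ((0:ℤ) : WithBot ℤ) := by
          simpa using hlt
        have hcond : ¬ (C2.eps i c < C1.phi i b1') := by
          rw [h2.eps_e i b2' c hec]
          refine not_lt.mpr ?_
          simpa using wb_lt (k := 0) (l := -1) hpad (by omega)
        rw [if_neg hcond, hf, Option.map_some]
  -- phi_bot
  · intro i p hbot
    obtain ⟨b1, b2⟩ := p
    simp only [KMtensor] at hbot ⊢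
    rw [max_eq_bot] at hbot
    obtain ⟨hb2, hb1⟩ := hbot
    rw [addc_eq_bot] at hb1
    rw [(h1.phi_bot i b1 hb1).1, (h1.phi_bot i b1 hb1).2,
        (h2.phi_bot i b2 hb2).1, (h2.phi_bot i b2 hb2).2]
    constructor <;> split_ifs <;> simp
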